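/- Let F be a field of characteristic zero and suppose x, y ∈ F satisfy x² + y² = −1. Then in the Hamilton quaternion algebra ℍ(F), the element e = (1/2)(1 + x·i + y·j) is an idempotent with e ≠ 0 and e ≠ 1, and e and 1 − e = (1/2)(1 − x·i − y·j) are orthogonal primitive idempotents of ℍ(F) summing to 1. -/

import Mathlib

open scoped Quaternion

/-- An idempotent `f` of a ring is primitive if `f ≠ 0` and whenever `f = f₁ + f₂` with
`f₁, f₂` orthogonal idempotents, then `f₁ = 0` or `f₂ = 0`. -/
def IsPrimitiveIdempotent {R : Type*} [Ring R] (f : R) : Prop :=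
  IsIdempotentElem f ∧ f ≠ 0 ∧
    ∀ f₁ f₂ : R, IsIdempotentElem f₁ → IsIdempotentElem f₂ →
      f₁ * f₂ = 0 → f₂ * f₁ = 0 → f = f₁ + f₂ → f₁ = 0 ∨ f₂ = 0

lemma aux_re (F : Type*) [Field F] [CharZero F] (f : ℍ[F]) (hf : IsIdempotentElem f)
    (h0 : f ≠ 0) (h1 : f ≠ 1) : f.re = 2⁻¹ := by
  obtain ⟨a, b, c, d⟩ := f
  have h := hf
  unfold IsIdempotentElem at h
  have hre := (Quaternion.re_mul _ _).symm.trans (congrArg QuaternionAlgebra.re h)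
  have hb := (Quaternion.imI_mul _ _).symm.trans (congrArg QuaternionAlgebra.imI h)
  have hc := (Quaternion.imJ_mul _ _).symm.trans (congrArg QuaternionAlgebra.imJ h)
  have hd := (Quaternion.imK_mul _ _).symm.trans (congrArg QuaternionAlgebra.imK h)
  dsimp only at hre hb hc hd
  by_contra ha
  have h2 : a + a - 1 ≠ 0 := fun hh => ha (by linear_combination (2⁻¹:F) * hh)
  have hb0 : b = 0 := by
    have : b * (a + a - 1) = 0 := by linear_combination hb
    exact (mul_eq_zero.1 this).resolve_right h2
  have hc0 : c = 0 := by
    have : c * (a + a - 1) = 0 := by linear_combination hc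
    exact (mul_eq_zero.1 this).resolve_right h2
  have hd0 : d = 0 := by
    have : d * (a + a - 1) = 0 := by linear_combination hd
    exact (mul_eq_zero.1 this).resolve_right h2
  subst hb0 hc0 hd0
  have : a * (a - 1) = 0 := by linear_combination hre
  rcases mul_eq_zero.1 this with h|h
  · exact h0 (by ext <;> simp [h])
  · exact h1 (by ext <;> simp [sub_eq_zero.1 h])

lemma aux_prim (F : Type*) [Field F] [CharZero F] (f : ℍ[F]) (hf : IsIdempotentElem f)
    (h0 : f ≠ 0) (h1 : f ≠ 1) : IsPrimitiveIdempotent f := by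
  refine ⟨hf, h0, fun f₁ f₂ hf₁ hf₂ ho₁ ho₂ hsum => ?_⟩
  by_contra hboth
  push_neg at hboth
  obtain ⟨hn1, hn2⟩ := hboth
  have hne1 : f₁ ≠ 1 := by
    rintro rfl; exact hn2 (by simpa using ho₁)
  have hne2 : f₂ ≠ 1 := by
    rintro rfl; exact hn1 (by simpa using ho₂)
  have r1 := aux_re F f₁ hf₁ hn1 hne1
  have r2 := aux_re F f₂ hf₂ hn2 hne2
  have rf := aux_re F f hf h0 h1
  have : f.re = f₁.re + f₂.re := by rw [hsum]; simp
  rw [rf, r1, r2] at this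
  have : (2:F)⁻¹ * 2 = (2⁻¹ + 2⁻¹) * 2 := by rw [← this]
  norm_num at this

/-- Let `F` be a field of characteristic zero and suppose `x, y ∈ F` satisfy
`x² + y² = −1`. Then in the Hamilton quaternion algebra `ℍ(F)`, the element
`e = (1/2)(1 + x·i + y·j)` is an idempotent with `e ≠ 0` and `e ≠ 1`, and `e` and
`1 − e = (1/2)(1 − x·i − y·j)` are orthogonal primitive idempotents of `ℍ(F)`
summing to `1`. -/
theorem stmt_6 (F : Type*) [Field F] [CharZero F] (x y : F) (h : x ^ 2 + y ^ 2 = -1)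
    (i j e : ℍ[F]) (hi : i = ⟨0, 1, 0, 0⟩) (hj : j = ⟨0, 0, 1, 0⟩)
    (he : e = (2⁻¹ : F) • (1 + x • i + y • j)) :
    IsIdempotentElem e ∧ e ≠ 0 ∧ e ≠ 1 ∧
      1 - e = (2⁻¹ : F) • (1 - x • i - y • j) ∧
      e * (1 - e) = 0 ∧ (1 - e) * e = 0 ∧
      IsPrimitiveIdempotent e ∧ IsPrimitiveIdempotent (1 - e) ∧
      e + (1 - e) = 1 := by
  subst hi hj
  have he' : e = (⟨2⁻¹, 2⁻¹ * x, 2⁻¹ * y, 0⟩ : ℍ[F]) := by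
    rw [he]; ext <;> simp <;> simp [Quaternion.re_smul (R := F) (a := (⟨_, _, _, _⟩ : ℍ[F])), Quaternion.imI_smul (R := F) (a := (⟨_, _, _, _⟩ : ℍ[F])),
      Quaternion.imJ_smul (R := F) (a := (⟨_, _, _, _⟩ : ℍ[F])), Quaternion.imK_smul (R := F) (a := (⟨_, _, _, _⟩ : ℍ[F]))]
  have hidem : IsIdempotentElem e := by
    rw [IsIdempotentElem, he']
    ext <;> simp [Quaternion.re_mul (⟨_, _, _, _⟩ : ℍ[F]) ⟨_, _, _, _⟩, Quaternion.imI_mul (⟨_, _, _, _⟩ : ℍ[F]) ⟨_, _, _, _⟩,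
      Quaternion.imJ_mul (⟨_, _, _, _⟩ : ℍ[F]) ⟨_, _, _, _⟩, Quaternion.imK_mul (⟨_, _, _, _⟩ : ℍ[F]) ⟨_, _, _, _⟩] <;> ring_nf <;> linear_combination (-(4:F)⁻¹) * h
  have h0 : e ≠ 0 := by
    rw [he']; intro hh
    have := congrArg QuaternionAlgebra.re hh
    norm_num at this
  have h1 : e ≠ 1 := by
    rw [he']; intro hh
    have := congrArg QuaternionAlgebra.re hh
    norm_num at this
  have ho1 : e * (1 - e) = 0 := by
    rw [mul_sub, mul_one, hidem, sub_self]
  have ho2 : (1 - e) * e = 0 := by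
    rw [sub_mul, one_mul, hidem, sub_self]
  have hidem' : IsIdempotentElem (1 - e) := hidem.one_sub
  have h0' : (1 : ℍ[F]) - e ≠ 0 := fun hh => h1 ((sub_eq_zero.1 hh).symm)
  have h1' : (1 : ℍ[F]) - e ≠ 1 := fun hh =>
    h0 (by rw [← sub_sub_cancel 1 e, hh, sub_self])
  refine ⟨hidem, h0, h1, ?_, ho1, ho2, aux_prim F e hidem h0 h1,
    aux_prim F _ hidem' h0' h1', by abel⟩
  rw [he']; ext <;> simp [Quaternion.re_sub 1 (⟨_, _, _, _⟩ : ℍ[F]), Quaternion.imI_sub 1 (⟨_, _, _, _⟩ : ℍ[F]),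
      Quaternion.imJ_sub 1 (⟨_, _, _, _⟩ : ℍ[F]), Quaternion.imK_sub 1 (⟨_, _, _, _⟩ : ℍ[F]), Quaternion.re_smul (R := F) (a := (⟨_, _, _, _⟩ : ℍ[F])), Quaternion.imI_smul (R := F) (a := (⟨_, _, _, _⟩ : ℍ[F])),
      Quaternion.imJ_smul (R := F) (a := (⟨_, _, _, _⟩ : ℍ[F])), Quaternion.imK_smul (R := F) (a := (⟨_, _, _, _⟩ : ℍ[F]))] <;> ring
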